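/- Let q ≥ 2, let G be a finite connected (q+1)-regular graph, and let k ≥ 1 be strictly less than the minimal injectivity radius min_{x∈V} ρ(x). Then for every K ∈ H_k one has ‖K̂_G‖²_HSN = ‖K‖²_{H_k}; in particular the linear map K ↦ K̂_G from H_k to operators on ℓ²(V) is injective. -/

import Mathlib

open Classical Finset

noncomputable section

def IsNB {V : Type} (G : SimpleGraph V) {k : ℕ} (ω : Fin (k + 1) → V) : Prop :=
  (∀ i j : Fin (k + 1), (j : ℕ) = (i : ℕ) + 1 → G.Adj (ω i) (ω j)) ∧
  (∀ i j : Fin (k + 1), (j : ℕ) = (i : ℕ) + 2 → ω i ≠ ω j)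

def nbFinset {V : Type} [Fintype V] (G : SimpleGraph V) (k : ℕ) :
    Finset (Fin (k + 1) → V) :=
  Finset.univ.filter fun ω => IsNB G ω

def RegularOfDegree {V : Type} [Fintype V] (G : SimpleGraph V) (d : ℕ) : Prop :=
  ∀ x : V, (Finset.univ.filter fun y => G.Adj x y).card = d

def ballHasCycle {V : Type} (G : SimpleGraph V) (x : V) (r : ℕ) : Prop :=
  ∃ (y : V) (w : G.Walk y y), w.IsCycle ∧ ∀ v ∈ w.support, G.dist x v ≤ r

def hNormSq {V : Type} [Fintype V] (G : SimpleGraph V) (k : ℕ)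
    (K : (Fin (k + 1) → V) → ℂ) : ℝ :=
  (1 / (Fintype.card V : ℝ)) * ∑ ω ∈ nbFinset G k, ‖K ω‖ ^ 2

/-- The kernel `K_G(x,y) = ∑ K(ω)`, summed over non-backtracking paths `ω ∈ B_k` from `x`
to `y`. -/
def kernelG {V : Type} [Fintype V] (G : SimpleGraph V) (k : ℕ)
    (K : (Fin (k + 1) → V) → ℂ) (x y : V) : ℂ :=
  ∑ ω ∈ (nbFinset G k).filter fun ω => ω 0 = x ∧ ω (Fin.last k) = y, K ω

/-- The normalized Hilbert-Schmidt squared norm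
`‖K̂_G‖²_HSN = (1/|V|) ∑_{x,y} |K_G(x,y)|²`. -/
def hsnNormSq {V : Type} [Fintype V] (G : SimpleGraph V) (k : ℕ)
    (K : (Fin (k + 1) → V) → ℂ) : ℝ :=
  (1 / (Fintype.card V : ℝ)) * ∑ x : V, ∑ y : V, ‖kernelG G k K x y‖ ^ 2

/-- A walk with no backtracking (in the sense that vertices two apart in the support are
distinct) in an acyclic graph is a path. -/
lemma nbwalk_isPath {V : Type} {G : SimpleGraph V} (hG : G.IsAcyclic) :
    ∀ {u v : V} (w : G.Walk u v),
      (∀ i : ℕ, i + 2 < w.support.length → w.support[i]? ≠ w.support[i + 2]?) → w.IsPath := by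
  intro u v w
  induction w with
  | nil => intro _; exact SimpleGraph.Walk.IsPath.nil
  | @cons u x v h p ih =>
    intro hnb
    have hp : p.IsPath := by
      apply ih
      intro i h2
      have h2' : (i + 1) + 2 < (SimpleGraph.Walk.cons h p).support.length := by
        simp only [SimpleGraph.Walk.support_cons, List.length_cons]; omega
      have := hnb (i + 1) h2'
      simpa only [SimpleGraph.Walk.support_cons, List.getElem?_cons_succ] using this
    rw [SimpleGraph.Walk.cons_isPath_iff]
    refine ⟨hp, ?_⟩
    intro hu
    -- p is nonempty in an interesting way
    cases p with
    | nil =>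
      simp only [SimpleGraph.Walk.support_nil, List.mem_singleton] at hu
      exact G.ne_of_adj h hu
    | @cons x y v h' p' =>
      -- u ≠ y from the non-backtracking condition at i = 0
      have huy : u ≠ y := by
        have hs : (SimpleGraph.Walk.cons h (SimpleGraph.Walk.cons h' p')).support
            = u :: x :: y :: p'.support.tail := by
          simp only [SimpleGraph.Walk.support_cons]
          rw [p'.support_eq_cons]
          rfl
        have h2' : 0 + 2 < (SimpleGraph.Walk.cons h (SimpleGraph.Walk.cons h' p')).support.length := by
          rw [hs]; simp
        have := hnb 0 h2'
        rw [hs] at this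
        simpa using this
      set p : G.Walk x v := SimpleGraph.Walk.cons h' p' with hpdef
      have hq : (p.takeUntil u hu).IsPath := hp.takeUntil hu
      -- two paths from u to x: the single edge, and the reverse of takeUntil
      have hsingle : (SimpleGraph.Walk.cons h SimpleGraph.Walk.nil : G.Walk u x).IsPath := by
        simp [SimpleGraph.Walk.cons_isPath_iff, G.ne_of_adj h]
      have hpaths := SimpleGraph.isAcyclic_iff_path_unique.mp hG
        (⟨SimpleGraph.Walk.cons h SimpleGraph.Walk.nil, hsingle⟩ : G.Path u x)
        ⟨(p.takeUntil u hu).reverse, hq.reverse⟩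
      have hw : (p.takeUntil u hu) = SimpleGraph.Walk.cons h.symm SimpleGraph.Walk.nil := by
        have := congrArg (fun q : G.Path u x => (q : G.Walk u x).reverse) hpaths
        simp only at this
        rw [SimpleGraph.Walk.reverse_reverse] at this
        rw [← this]
        simp [SimpleGraph.Walk.reverse_cons]
      have hspec := p.take_spec hu
      have hsup : p.support = (p.takeUntil u hu).support
          ++ (p.dropUntil u hu).support.tail := by
        rw [← SimpleGraph.Walk.support_append, hspec]
      rw [hw] at hsup
      simp only [SimpleGraph.Walk.support_cons, SimpleGraph.Walk.support_nil] at hsup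
      have hsup2 : p.support = x :: y :: p'.support.tail := by
        rw [hpdef]
        simp only [SimpleGraph.Walk.support_cons]
        conv_lhs => rw [p'.support_eq_cons]
      rw [hsup2] at hsup
      simp only [List.cons_append] at hsup
      have hinj1 := (List.cons.injEq _ _ _ _).mp hsup
      have hinj2 := (List.cons.injEq _ _ _ _).mp hinj1.2
      exact huy hinj2.1.symm

/-- Build a walk from a function `Fin (n+1) → V` whose consecutive values are adjacent. -/
def fnWalk {V : Type} (G : SimpleGraph V) :
    ∀ (n : ℕ) (ω : Fin (n + 1) → V)
      (_ : ∀ (i : ℕ) (h : i < n),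
        G.Adj (ω ⟨i, by omega⟩) (ω ⟨i + 1, by omega⟩)),
      G.Walk (ω ⟨0, Nat.succ_pos n⟩) (ω ⟨n, Nat.lt_succ_self n⟩)
  | 0, _, _ => SimpleGraph.Walk.nil
  | (n + 1), ω, h =>
      SimpleGraph.Walk.cons (h 0 (Nat.succ_pos n))
        (fnWalk G n (fun i => ω i.succ) (fun i hi => h (i + 1) (by omega)))

lemma fnWalk_support {V : Type} (G : SimpleGraph V) :
    ∀ (n : ℕ) (ω : Fin (n + 1) → V) (h : ∀ (i : ℕ) (hh : i < n),
        G.Adj (ω ⟨i, by omega⟩) (ω ⟨i + 1, by omega⟩)),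
      (fnWalk G n ω h).support = List.ofFn ω
  | 0, ω, h => by
      simp [fnWalk, List.ofFn_succ]
  | (n + 1), ω, h => by
      rw [fnWalk, SimpleGraph.Walk.support_cons,
        fnWalk_support G n (fun i => ω i.succ) (fun i hi => h (i + 1) (by omega))]
      conv_rhs => rw [List.ofFn_succ]
      have h0 : (⟨0, Nat.succ_pos (n + 1)⟩ : Fin (n + 2)) = 0 := by ext; simp
      rw [h0]

lemma dist_along {V : Type} {G : SimpleGraph V} (hc : G.Connected) {n : ℕ}
    (ω : Fin (n + 1) → V)
    (hadj : ∀ i j : Fin (n + 1), (j : ℕ) = (i : ℕ) + 1 → G.Adj (ω i) (ω j)) :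
    ∀ (m : ℕ) (hm : m < n + 1), G.dist (ω ⟨0, Nat.succ_pos n⟩) (ω ⟨m, hm⟩) ≤ m := by
  intro m
  induction m with
  | zero => intro hm; simp
  | succ m ihm =>
    intro hm
    have h1 : G.dist (ω ⟨m, by omega⟩) (ω ⟨m + 1, hm⟩) ≤ 1 := by
      have hadj' : G.Adj (ω ⟨m, by omega⟩) (ω ⟨m + 1, hm⟩) :=
        hadj ⟨m, by omega⟩ ⟨m + 1, hm⟩ rfl
      exact le_trans (SimpleGraph.dist_le (SimpleGraph.Walk.cons hadj'
        SimpleGraph.Walk.nil)) (by simp)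
    calc G.dist (ω ⟨0, Nat.succ_pos n⟩) (ω ⟨m + 1, hm⟩)
        ≤ G.dist (ω ⟨0, Nat.succ_pos n⟩) (ω ⟨m, by omega⟩)
          + G.dist (ω ⟨m, by omega⟩) (ω ⟨m + 1, hm⟩) := hc.dist_triangle
      _ ≤ m + 1 := add_le_add (ihm (by omega)) h1

/-- Key uniqueness lemma: below the injectivity radius, a non-backtracking path is determined
by its endpoints. -/
lemma nb_unique {V : Type} {G : SimpleGraph V} (hconn : G.Connected)
    {k : ℕ} (hinj : ∀ x : V, ¬ ballHasCycle G x (k + 1))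
    {ω₁ ω₂ : Fin (k + 1) → V} (h₁ : IsNB G ω₁) (h₂ : IsNB G ω₂)
    (h0 : ω₁ 0 = ω₂ 0) (hl : ω₁ (Fin.last k) = ω₂ (Fin.last k)) : ω₁ = ω₂ := by
  classical
  set x : V := ω₁ 0 with hx
  set S : Set V := {v | G.dist x v ≤ k + 1} with hS
  -- the induced graph on the ball is acyclic
  have hacyc : (G.induce S).IsAcyclic := by
    intro a c hc
    apply hinj x
    refine ⟨(a : V), c.map (SimpleGraph.Embedding.induce S).toHom, ?_, ?_⟩
    · exact hc.map (Subtype.val_injective)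
    · intro v hv
      change v ∈ (c.map (SimpleGraph.Embedding.induce S).toHom).support at hv
      rw [SimpleGraph.Walk.support_map] at hv
      obtain ⟨b, _, rfl⟩ := List.mem_map.mp hv
      exact b.2
  -- membership of path vertices in the ball
  have h0' : (⟨0, Nat.succ_pos k⟩ : Fin (k + 1)) = 0 := by ext; simp
  have hmem₁ : ∀ i : Fin (k + 1), ω₁ i ∈ S := by
    intro i
    have hd := dist_along hconn ω₁ h₁.1 i.1 i.2
    rw [h0'] at hd
    have hi : (⟨i.1, i.2⟩ : Fin (k + 1)) = i := rfl
    rw [hi, ← hx] at hd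
    show G.dist x (ω₁ i) ≤ k + 1
    exact le_trans hd (le_trans (Nat.le_of_lt_succ i.2) (Nat.le_succ k))
  have hmem₂ : ∀ i : Fin (k + 1), ω₂ i ∈ S := by
    intro i
    have hd := dist_along hconn ω₂ h₂.1 i.1 i.2
    rw [h0'] at hd
    have hi : (⟨i.1, i.2⟩ : Fin (k + 1)) = i := rfl
    rw [hi, ← h0] at hd
    show G.dist x (ω₂ i) ≤ k + 1
    exact le_trans hd (le_trans (Nat.le_of_lt_succ i.2) (Nat.le_succ k))
  -- lift the paths to the induced graph
  set σ₁ : Fin (k + 1) → S := fun i => ⟨ω₁ i, hmem₁ i⟩ with hσ₁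
  set σ₂ : Fin (k + 1) → S := fun i => ⟨ω₂ i, hmem₂ i⟩ with hσ₂
  have hadj₁ : ∀ (i : ℕ) (hh : i < k),
      (G.induce S).Adj (σ₁ ⟨i, by omega⟩) (σ₁ ⟨i + 1, by omega⟩) := by
    intro i hh
    exact h₁.1 ⟨i, by omega⟩ ⟨i + 1, by omega⟩ rfl
  have hadj₂ : ∀ (i : ℕ) (hh : i < k),
      (G.induce S).Adj (σ₂ ⟨i, by omega⟩) (σ₂ ⟨i + 1, by omega⟩) := by
    intro i hh
    exact h₂.1 ⟨i, by omega⟩ ⟨i + 1, by omega⟩ rfl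
  set w₁ := fnWalk (G.induce S) k σ₁ hadj₁ with hw₁
  set w₂ := fnWalk (G.induce S) k σ₂ hadj₂ with hw₂
  have hs₁ : w₁.support = List.ofFn σ₁ := fnWalk_support _ k σ₁ hadj₁
  have hs₂ : w₂.support = List.ofFn σ₂ := fnWalk_support _ k σ₂ hadj₂
  -- the lifted walks are non-backtracking, hence paths
  have hnb : ∀ (σ : Fin (k + 1) → S) (w : (G.induce S).Walk (σ ⟨0, Nat.succ_pos k⟩)
        (σ ⟨k, Nat.lt_succ_self k⟩)) (hsup : w.support = List.ofFn σ)
      (hnbσ : ∀ i j : Fin (k + 1), (j : ℕ) = (i : ℕ) + 2 → (σ i : V) ≠ (σ j : V)),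
      w.IsPath := by
    intro σ w hsup hnbσ
    apply nbwalk_isPath hacyc
    intro i h2
    rw [hsup] at h2 ⊢
    have hlen : (List.ofFn σ).length = k + 1 := List.length_ofFn
    rw [List.getElem?_eq_getElem (by omega), List.getElem?_eq_getElem (by omega),
      List.getElem_ofFn, List.getElem_ofFn]
    intro hEq
    have hEq' := Option.some.inj hEq
    exact hnbσ ⟨i, by omega⟩ ⟨i + 2, by omega⟩ rfl (congrArg Subtype.val hEq')
  have hp₁ : w₁.IsPath := hnb σ₁ w₁ hs₁ (fun i j hij => h₁.2 i j hij)
  have hp₂ : w₂.IsPath := hnb σ₂ w₂ hs₂ (fun i j hij => h₂.2 i j hij)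
  -- align endpoints
  have he0 : σ₂ ⟨0, Nat.succ_pos k⟩ = σ₁ ⟨0, Nat.succ_pos k⟩ := by
    apply Subtype.ext
    have h0' : (⟨0, Nat.succ_pos k⟩ : Fin (k + 1)) = 0 := rfl
    simp only [hσ₁, hσ₂, h0']
    exact h0.symm
  have hel : σ₂ ⟨k, Nat.lt_succ_self k⟩ = σ₁ ⟨k, Nat.lt_succ_self k⟩ := by
    apply Subtype.ext
    have hl' : (⟨k, Nat.lt_succ_self k⟩ : Fin (k + 1)) = Fin.last k := rfl
    simp only [hσ₁, hσ₂, hl']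
    exact hl.symm
  set w₂' := w₂.copy he0 hel with hw₂'
  have hp₂' : w₂'.IsPath := by rw [hw₂', SimpleGraph.Walk.isPath_copy]; exact hp₂
  have hpaths := SimpleGraph.isAcyclic_iff_path_unique.mp hacyc
    (⟨w₁, hp₁⟩ : (G.induce S).Path _ _) ⟨w₂', hp₂'⟩
  have hwalks : w₁ = w₂' := congrArg Subtype.val hpaths
  have hsups : List.ofFn σ₁ = List.ofFn σ₂ := by
    rw [← hs₁, ← hs₂, hwalks, hw₂', SimpleGraph.Walk.support_copy]
  have hσeq : σ₁ = σ₂ := List.ofFn_inj.mp hsups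
  funext i
  have := congrFun hσeq i
  exact congrArg Subtype.val this

/-- Proposition 2 (i) of the paper: below the injectivity radius, the normalized Hilbert-Schmidt
norm of `K̂_G` equals the `H_k`-norm of `K`; in particular `K ↦ K̂_G` is injective on `H_k`. -/
theorem hsn_norm_eq_below_injectivity_radius
    (q : ℕ) (hq : 2 ≤ q)
    (V : Type) [Fintype V] (G : SimpleGraph V)
    (hconn : G.Connected) (hreg : RegularOfDegree G (q + 1))
    (k : ℕ) (hk : 1 ≤ k)
    (hinj : ∀ x : V, ¬ ballHasCycle G x (k + 1)) :
    (∀ K : (Fin (k + 1) → V) → ℂ, hsnNormSq G k K = hNormSq G k K) ∧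
    (∀ K₁ K₂ : (Fin (k + 1) → V) → ℂ,
      (∀ x y : V, kernelG G k K₁ x y = kernelG G k K₂ x y) →
      ∀ ω ∈ nbFinset G k, K₁ ω = K₂ ω) := by
  classical
  have huniq : ∀ (x y : V) (ω₁ ω₂ : Fin (k + 1) → V),
      ω₁ ∈ (nbFinset G k).filter (fun ω => ω 0 = x ∧ ω (Fin.last k) = y) →
      ω₂ ∈ (nbFinset G k).filter (fun ω => ω 0 = x ∧ ω (Fin.last k) = y) → ω₁ = ω₂ := by
    intro x y ω₁ ω₂ hm1 hm2
    rw [Finset.mem_filter] at hm1 hm2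
    have hn1 : IsNB G ω₁ := by
      have := hm1.1; rw [nbFinset, Finset.mem_filter] at this; exact this.2
    have hn2 : IsNB G ω₂ := by
      have := hm2.1; rw [nbFinset, Finset.mem_filter] at this; exact this.2
    exact nb_unique hconn hinj hn1 hn2 (hm1.2.1.trans hm2.2.1.symm)
      (hm1.2.2.trans hm2.2.2.symm)
  have hsingl : ∀ (ω : Fin (k + 1) → V), ω ∈ nbFinset G k →
      (nbFinset G k).filter
        (fun ω' => ω' 0 = ω 0 ∧ ω' (Fin.last k) = ω (Fin.last k)) = {ω} := by
    intro ω hω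
    have hmem : ω ∈ (nbFinset G k).filter
        (fun ω' => ω' 0 = ω 0 ∧ ω' (Fin.last k) = ω (Fin.last k)) :=
      Finset.mem_filter.mpr ⟨hω, rfl, rfl⟩
    exact Finset.eq_singleton_iff_unique_mem.mpr
      ⟨hmem, fun b hb => huniq _ _ b ω hb hmem⟩
  constructor
  · intro K
    rw [hsnNormSq, hNormSq]
    congr 1
    have hker : ∀ x y : V, ‖kernelG G k K x y‖ ^ 2
        = ∑ ω ∈ (nbFinset G k).filter (fun ω => ω 0 = x ∧ ω (Fin.last k) = y),
            ‖K ω‖ ^ 2 := by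
      intro x y
      rcases Finset.eq_empty_or_nonempty
        ((nbFinset G k).filter fun ω => ω 0 = x ∧ ω (Fin.last k) = y) with he | ⟨a, ha⟩
      · rw [kernelG, he]; simp
      · have hmema := Finset.mem_filter.mp ha
        have hsing : (nbFinset G k).filter
            (fun ω => ω 0 = x ∧ ω (Fin.last k) = y) = {a} :=
          Finset.eq_singleton_iff_unique_mem.mpr ⟨ha, fun b hb => huniq x y b a hb ha⟩
        rw [kernelG, hsing, Finset.sum_singleton, Finset.sum_singleton]
    calc ∑ x : V, ∑ y : V, ‖kernelG G k K x y‖ ^ 2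
        = ∑ x : V, ∑ y : V, ∑ ω ∈ (nbFinset G k).filter
            (fun ω => ω 0 = x ∧ ω (Fin.last k) = y), ‖K ω‖ ^ 2 := by
          exact Finset.sum_congr rfl fun x _ => Finset.sum_congr rfl fun y _ => hker x y
      _ = ∑ p : V × V, ∑ ω ∈ (nbFinset G k).filter
            (fun ω => ω 0 = p.1 ∧ ω (Fin.last k) = p.2), ‖K ω‖ ^ 2 := by
          rw [← Finset.univ_product_univ, Finset.sum_product]
      _ = ∑ p : V × V, ∑ ω ∈ (nbFinset G k).filter
            (fun ω => (ω 0, ω (Fin.last k)) = p), ‖K ω‖ ^ 2 := by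
          refine Finset.sum_congr rfl fun p _ => Finset.sum_congr ?_ fun _ _ => rfl
          apply Finset.filter_congr
          intro ω _
          simp [Prod.ext_iff]
      _ = ∑ ω ∈ nbFinset G k, ‖K ω‖ ^ 2 :=
          Finset.sum_fiberwise (nbFinset G k)
            (fun ω => (ω 0, ω (Fin.last k))) (fun ω => ‖K ω‖ ^ 2)
  · intro K₁ K₂ hK ω hω
    have h1 : kernelG G k K₁ (ω 0) (ω (Fin.last k)) = K₁ ω := by
      rw [kernelG, hsingl ω hω, Finset.sum_singleton]
    have h2 : kernelG G k K₂ (ω 0) (ω (Fin.last k)) = K₂ ω := by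
      rw [kernelG, hsingl ω hω, Finset.sum_singleton]
    rw [← h1, ← h2, hK]

end
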